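/- Let S_n be a random walk on ℤ^d with i.i.d. steps, τ its first return time to the origin, and let m, n be integers with 1 ≤ m < n. Then P{τ = n} = ∑_{x ∈ ℤ^d, x ≠ 0} P{S_m = x, τ > m} · P{S_{n-m} = -x, τ > n-m}. -/

import Mathlib

open MeasureTheory ProbabilityTheory

namespace Stmt9Aux

variable {V : Type*}

/-- partial sum of the first `k` coordinates of a vector -/
def psum [AddCommMonoid V] {N : ℕ} (v : Fin N → V) (k : ℕ) : V :=
  ∑ i : Fin N, if (i : ℕ) < k then v i else 0

lemma psum_zero [AddCommMonoid V] {N : ℕ} (v : Fin N → V) : psum v 0 = 0 := by simp [psum]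

lemma psum_pt [AddCommMonoid V] {N : ℕ} (g : ℕ → V) {k : ℕ} (hk : k ≤ N) :
    psum (fun i : Fin N => g ↑i) k = ∑ j ∈ Finset.range k, g j := by
  unfold psum
  rw [Fin.sum_univ_eq_sum_range (fun j => if j < k then g j else 0) N, ← Finset.sum_filter]
  congr 1
  ext j
  simp only [Finset.mem_filter, Finset.mem_range]
  omega

lemma psum_measurable [AddCommMonoid V] [MeasurableSpace V] [MeasurableAdd₂ V] {N : ℕ} (k : ℕ) :
    Measurable (fun v : Fin N → V => psum v k) :=
  Finset.measurable_sum _ (fun i _ => by split <;> fun_prop)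

lemma psum_rev [AddCommGroup V] {N : ℕ} (v : Fin N → V) {k : ℕ} (hk : k ≤ N) :
    psum (fun i => v (Fin.rev i)) k = psum v N - psum v (N - k) := by
  unfold psum
  rw [Fintype.sum_equiv Fin.revPerm (fun i => if (i:ℕ) < k then v (Fin.rev i) else 0)
    (fun j => if (N - 1 - (j:ℕ)) < k then v j else 0)
    (fun j => by
      have hj := j.isLt
      simp only [Fin.revPerm_apply, Fin.val_rev]
      exact if_congr (by omega) rfl rfl)]
  rw [← Finset.sum_sub_distrib]
  apply Finset.sum_congr rfl
  intro j _
  have hj := j.isLt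
  by_cases h : (j : ℕ) < N - k
  · rw [if_pos h, if_neg (by omega)]
    simp
  · rw [if_neg h, if_pos (by omega)]
    simp

lemma jointLaw {Ω : Type*} [MeasurableSpace Ω] {mV : MeasurableSpace V}
    (μ : Measure Ω) [IsProbabilityMeasure μ] (f : ℕ → Ω → V)
    (hmeas : ∀ i, Measurable (f i))
    (hindep : iIndepFun f μ) (a N : ℕ) :
    μ.map (fun ω (i : Fin N) => f (a + ↑i) ω)
      = Measure.pi (fun i : Fin N => μ.map (f (a + ↑i))) := by
  classical
  have hmap : ∀ i : Fin N, IsProbabilityMeasure (μ.map (f (a + ↑i))) :=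
    fun i => Measure.isProbabilityMeasure_map (hmeas _).aemeasurable
  refine (Measure.pi_eq fun s hs => ?_).symm
  have hvec : Measurable (fun ω (i : Fin N) => f (a + ↑i) ω) :=
    measurable_pi_lambda _ fun i => hmeas _
  rw [Measure.map_apply hvec (MeasurableSet.univ_pi hs)]
  set sets : ℕ → Set V := fun j => if h : j - a < N then s ⟨j - a, h⟩ else Set.univ with hsets
  have hkey : ∀ i : Fin N, sets (a + ↑i) = s i := by
    intro i
    simp only [hsets, Nat.add_sub_cancel_left, i.isLt, dif_pos, Fin.eta]
  have hset : (fun ω (i : Fin N) => f (a + ↑i) ω) ⁻¹' Set.univ.pi s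
      = ⋂ j ∈ (Finset.range N).image (a + ·), f j ⁻¹' sets j := by
    ext ω
    simp only [Set.mem_preimage, Set.mem_pi, Set.mem_univ, forall_true_left, Set.mem_iInter,
      Finset.mem_image, Finset.mem_range]
    constructor
    · rintro h j ⟨i, hi, rfl⟩
      have := h ⟨i, hi⟩
      rwa [hkey ⟨i, hi⟩]
    · intro h i
      rw [← hkey i]
      exact h _ ⟨i, i.isLt, rfl⟩
  rw [hset, hindep.measure_inter_preimage_eq_mul _ (fun j _ => by
    simp only [hsets]; split
    · exact hs _
    · exact MeasurableSet.univ)]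
  rw [Finset.prod_image (fun x _ y _ h => by omega)]
  rw [← Fin.prod_univ_eq_prod_range (fun j => μ (f (a + j) ⁻¹' sets (a + j))) N]
  exact Finset.prod_congr rfl fun i _ => by
    rw [hkey i, Measure.map_apply (hmeas _) (hs i)]

end Stmt9Aux

open Stmt9Aux

/-- for `1 ≤ m < n`,
`P{τ = n} = ∑_{x ≠ 0} P{S_m = x, τ > m} · P{S_{n-m} = -x, τ > n-m}`. -/
theorem stmt9
    {d : ℕ} {Ω : Type*} [MeasurableSpace Ω]
    (μ : MeasureTheory.Measure Ω) [MeasureTheory.IsProbabilityMeasure μ]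
    (ξ : ℕ → Ω → (Fin d → ℤ))
    (hmeas : ∀ i, Measurable (ξ i))
    (hindep : ProbabilityTheory.iIndepFun ξ μ)
    (hident : ∀ i, ProbabilityTheory.IdentDistrib (ξ i) (ξ 0) μ μ)
    (S : ℕ → Ω → (Fin d → ℤ))
    (hS : ∀ n ω, S n ω = ∑ i ∈ Finset.range n, ξ i ω)
    (m n : ℕ) (hm : 1 ≤ m) (hmn : m < n) :
    (μ {ω | S n ω = 0 ∧ ∀ k, 0 < k → k < n → S k ω ≠ 0}).toReal =
      ∑' x : {y : Fin d → ℤ // y ≠ 0},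
        (μ {ω | S m ω = x.1 ∧ ∀ k, 0 < k → k ≤ m → S k ω ≠ 0}).toReal *
          (μ {ω | S (n - m) ω = -x.1 ∧
            ∀ k, 0 < k → k ≤ n - m → S k ω ≠ 0}).toReal := by
  classical
  obtain ⟨N, rfl⟩ : ∃ N, n = m + N := ⟨n - m, by omega⟩
  have hN : 0 < N := by omega
  simp only [Nat.add_sub_cancel_left]
  have hSmeas : ∀ k, Measurable (S k) := by
    intro k
    have : S k = fun ω => ∑ i ∈ Finset.range k, ξ i ω := funext fun ω => hS k ω
    rw [this]
    exact Finset.measurable_sum _ fun i _ => hmeas i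
  have hsplit : ∀ (ω : Ω) (j : ℕ),
      S (m + j) ω = S m ω + ∑ i ∈ Finset.range j, ξ (m + i) ω := by
    intro ω j
    rw [hS, hS, Finset.sum_range_add]
  -- the middle event, as a preimage target set
  have hGmeasfun : Measurable (fun ω (i : Fin N) => ξ (m + ↑i) ω) :=
    measurable_pi_lambda _ fun i => hmeas _
  have hG0measfun : Measurable (fun ω (i : Fin N) => ξ (0 + ↑i) ω) :=
    measurable_pi_lambda _ fun i => hmeas _
  -- vector sets
  set sA : (Fin d → ℤ) → Set (Fin m → Fin d → ℤ) := fun x =>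
    {v | psum v m = x ∧ ∀ k, 0 < k → k ≤ m → psum v k ≠ 0} with hsA
  set sG : (Fin d → ℤ) → Set (Fin N → Fin d → ℤ) := fun x =>
    {v | psum v N = -x ∧ ∀ j, 0 < j → j < N → psum v j ≠ -x} with hsG
  set sD : (Fin d → ℤ) → Set (Fin N → Fin d → ℤ) := fun x =>
    {v | psum v N = -x ∧ ∀ k, 0 < k → k ≤ N → psum v k ≠ 0} with hsD
  have hsAmeas : ∀ x, MeasurableSet (sA x) := by
    intro x
    have : sA x = ((psum · m) ⁻¹' {x}) ∩
        ⋂ (k : ℕ), ⋂ (_ : 0 < k ∧ k ≤ m), ((psum · k) ⁻¹' {(0 : Fin d → ℤ)})ᶜ := by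
      ext v
      simp only [hsA, Set.mem_inter_iff, Set.mem_preimage, Set.mem_singleton_iff,
        Set.mem_iInter, Set.mem_compl_iff, Set.mem_setOf_eq]
      constructor
      · rintro ⟨h1, h2⟩; exact ⟨h1, fun k hk => h2 k hk.1 hk.2⟩
      · rintro ⟨h1, h2⟩; exact ⟨h1, fun k h1' h2' => h2 k ⟨h1', h2'⟩⟩
    rw [this]
    exact ((psum_measurable m) (measurableSet_singleton x)).inter
      (MeasurableSet.iInter fun k => MeasurableSet.iInter fun _ =>
        ((psum_measurable k) (measurableSet_singleton 0)).compl)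
  have hsGmeas : ∀ x, MeasurableSet (sG x) := by
    intro x
    have : sG x = ((psum · N) ⁻¹' {-x}) ∩
        ⋂ (j : ℕ), ⋂ (_ : 0 < j ∧ j < N), ((psum · j) ⁻¹' {-x})ᶜ := by
      ext v
      simp only [hsG, Set.mem_inter_iff, Set.mem_preimage, Set.mem_singleton_iff,
        Set.mem_iInter, Set.mem_compl_iff, Set.mem_setOf_eq]
      constructor
      · rintro ⟨h1, h2⟩; exact ⟨h1, fun k hk => h2 k hk.1 hk.2⟩
      · rintro ⟨h1, h2⟩; exact ⟨h1, fun k h1' h2' => h2 k ⟨h1', h2'⟩⟩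
    rw [this]
    exact ((psum_measurable N) (measurableSet_singleton (-x))).inter
      (MeasurableSet.iInter fun j => MeasurableSet.iInter fun _ =>
        ((psum_measurable j) (measurableSet_singleton (-x))).compl)
  have hsDmeas : ∀ x, MeasurableSet (sD x) := by
    intro x
    have : sD x = ((psum · N) ⁻¹' {-x}) ∩
        ⋂ (k : ℕ), ⋂ (_ : 0 < k ∧ k ≤ N), ((psum · k) ⁻¹' {(0 : Fin d → ℤ)})ᶜ := by
      ext v
      simp only [hsD, Set.mem_inter_iff, Set.mem_preimage, Set.mem_singleton_iff,
        Set.mem_iInter, Set.mem_compl_iff, Set.mem_setOf_eq]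
      constructor
      · rintro ⟨h1, h2⟩; exact ⟨h1, fun k hk => h2 k hk.1 hk.2⟩
      · rintro ⟨h1, h2⟩; exact ⟨h1, fun k h1' h2' => h2 k ⟨h1', h2'⟩⟩
    rw [this]
    exact ((psum_measurable N) (measurableSet_singleton (-x))).inter
      (MeasurableSet.iInter fun k => MeasurableSet.iInter fun _ =>
        ((psum_measurable k) (measurableSet_singleton 0)).compl)
  -- events as preimages
  have hFA : ∀ x : Fin d → ℤ, {ω | S m ω = x ∧ ∀ k, 0 < k → k ≤ m → S k ω ≠ 0}
      = (fun ω (i : Fin m) => ξ ↑i ω) ⁻¹' sA x := by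
    intro x
    ext ω
    have hps : ∀ k, k ≤ m → psum (fun i : Fin m => ξ ↑i ω) k = S k ω := fun k hk => by
      rw [psum_pt (fun j => ξ j ω) hk, hS]
    simp only [hsA, Set.mem_preimage, Set.mem_setOf_eq]
    constructor
    · rintro ⟨h1, h2⟩
      exact ⟨by rw [hps m le_rfl]; exact h1,
        fun k hk hkm => by rw [hps k hkm]; exact h2 k hk hkm⟩
    · rintro ⟨h1, h2⟩
      exact ⟨by rw [← hps m le_rfl]; exact h1,
        fun k hk hkm => by rw [← hps k hkm]; exact h2 k hk hkm⟩
  have hGC : ∀ x : Fin d → ℤ,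
      {ω | (∑ i ∈ Finset.range N, ξ (m + i) ω) = -x ∧
        ∀ j, 0 < j → j < N → (∑ i ∈ Finset.range j, ξ (m + i) ω) ≠ -x}
      = (fun ω (i : Fin N) => ξ (m + ↑i) ω) ⁻¹' sG x := by
    intro x
    ext ω
    have hps : ∀ k, k ≤ N → psum (fun i : Fin N => ξ (m + ↑i) ω) k
        = ∑ i ∈ Finset.range k, ξ (m + i) ω := fun k hk => psum_pt (fun j => ξ (m + j) ω) hk
    simp only [hsG, Set.mem_preimage, Set.mem_setOf_eq]
    constructor
    · rintro ⟨h1, h2⟩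
      exact ⟨by rw [hps N le_rfl]; exact h1,
        fun j hj hjN => by rw [hps j (le_of_lt hjN)]; exact h2 j hj hjN⟩
    · rintro ⟨h1, h2⟩
      exact ⟨by rw [← hps N le_rfl]; exact h1,
        fun j hj hjN => by rw [← hps j (le_of_lt hjN)]; exact h2 j hj hjN⟩
  have hG0D : ∀ x : Fin d → ℤ, {ω | S N ω = -x ∧ ∀ k, 0 < k → k ≤ N → S k ω ≠ 0}
      = (fun ω (i : Fin N) => ξ (0 + ↑i) ω) ⁻¹' sD x := by
    intro x
    ext ω
    have hps : ∀ k, k ≤ N → psum (fun i : Fin N => ξ (0 + ↑i) ω) k = S k ω := fun k hk => by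
      rw [psum_pt (fun j => ξ (0 + j) ω) hk, hS]
      simp only [Nat.zero_add]
    simp only [hsD, Set.mem_preimage, Set.mem_setOf_eq]
    constructor
    · rintro ⟨h1, h2⟩
      exact ⟨by rw [hps N le_rfl]; exact h1,
        fun k hk hkN => by rw [hps k hkN]; exact h2 k hk hkN⟩
    · rintro ⟨h1, h2⟩
      exact ⟨by rw [← hps N le_rfl]; exact h1,
        fun k hk hkN => by rw [← hps k hkN]; exact h2 k hk hkN⟩
  -- decomposition of the event {τ = n}
  have hE : {ω | S (m + N) ω = 0 ∧ ∀ k, 0 < k → k < m + N → S k ω ≠ 0}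
      = ⋃ x : {y : Fin d → ℤ // y ≠ 0},
          ({ω | S m ω = x.1 ∧ ∀ k, 0 < k → k ≤ m → S k ω ≠ 0} ∩
           {ω | (∑ i ∈ Finset.range N, ξ (m + i) ω) = -x.1 ∧
             ∀ j, 0 < j → j < N → (∑ i ∈ Finset.range j, ξ (m + i) ω) ≠ -x.1}) := by
    ext ω
    simp only [Set.mem_setOf_eq, Set.mem_iUnion, Set.mem_inter_iff]
    constructor
    · rintro ⟨h0, hne⟩
      have hx0 : S m ω ≠ 0 := hne m hm (by omega)
      refine ⟨⟨S m ω, hx0⟩, ⟨rfl, fun k hk hkm => hne k hk (by omega)⟩, ?_, ?_⟩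
      · have h := hsplit ω N
        rw [h0] at h
        exact eq_neg_of_add_eq_zero_right h.symm
      · intro j hj hjN hEq
        refine hne (m + j) (by omega) (by omega) ?_
        rw [hsplit ω j, hEq]
        simp
    · rintro ⟨⟨x, hx0⟩, ⟨hxm, hle⟩, htot, hmid⟩
      refine ⟨by rw [hsplit ω N, htot, hxm]; simp, ?_⟩
      intro k hk hkN
      rcases le_or_gt k m with h | h
      · exact hle k hk h
      · have hkm : k = m + (k - m) := by omega
        rw [hkm, hsplit ω (k - m), hxm]
        intro hzero
        exact hmid (k - m) (by omega) (by omega) (eq_neg_of_add_eq_zero_right hzero)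
  -- measurability of the pieces
  have hACmeas : ∀ x : {y : Fin d → ℤ // y ≠ 0},
      MeasurableSet ({ω | S m ω = x.1 ∧ ∀ k, 0 < k → k ≤ m → S k ω ≠ 0} ∩
        {ω | (∑ i ∈ Finset.range N, ξ (m + i) ω) = -x.1 ∧
          ∀ j, 0 < j → j < N → (∑ i ∈ Finset.range j, ξ (m + i) ω) ≠ -x.1}) := by
    intro x
    rw [hFA x.1, hGC x.1]
    exact ((measurable_pi_lambda _ fun i : Fin m => hmeas (↑i : ℕ)) (hsAmeas x.1)).inter
      (hGmeasfun (hsGmeas x.1))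
  -- disjointness
  have hdisj : Pairwise (Function.onFun Disjoint
      (fun x : {y : Fin d → ℤ // y ≠ 0} =>
        {ω | S m ω = x.1 ∧ ∀ k, 0 < k → k ≤ m → S k ω ≠ 0} ∩
        {ω | (∑ i ∈ Finset.range N, ξ (m + i) ω) = -x.1 ∧
          ∀ j, 0 < j → j < N → (∑ i ∈ Finset.range j, ξ (m + i) ω) ≠ -x.1})) := by
    intro x y hxy
    refine Set.disjoint_left.mpr fun ω hxω hyω => hxy (Subtype.ext ?_)
    exact hxω.1.1.symm.trans hyω.1.1
  -- independence
  have hIndep : IndepFun (fun ω (i : Fin m) => ξ ↑i ω) (fun ω (i : Fin N) => ξ (m + ↑i) ω) μ := by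
    have h := hindep.indepFun_finset (Finset.range m) (Finset.Ico m (m + N))
      (by simp only [Finset.disjoint_left, Finset.mem_range, Finset.mem_Ico]; omega) hmeas
    have hφ : Measurable (fun (g : (j : (Finset.range m)) → Fin d → ℤ) (i : Fin m) =>
        g ⟨↑i, Finset.mem_range.mpr i.isLt⟩) :=
      measurable_pi_lambda _ fun i => measurable_pi_apply _
    have hψ : Measurable (fun (g : (j : (Finset.Ico m (m + N))) → Fin d → ℤ) (i : Fin N) =>
        g ⟨m + ↑i, Finset.mem_Ico.mpr ⟨by omega, by omega⟩⟩) :=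
      measurable_pi_lambda _ fun i => measurable_pi_apply _
    exact h.comp hφ hψ
  have hprod : ∀ x : {y : Fin d → ℤ // y ≠ 0},
      μ ({ω | S m ω = x.1 ∧ ∀ k, 0 < k → k ≤ m → S k ω ≠ 0} ∩
        {ω | (∑ i ∈ Finset.range N, ξ (m + i) ω) = -x.1 ∧
          ∀ j, 0 < j → j < N → (∑ i ∈ Finset.range j, ξ (m + i) ω) ≠ -x.1})
      = μ {ω | S m ω = x.1 ∧ ∀ k, 0 < k → k ≤ m → S k ω ≠ 0} *
        μ {ω | (∑ i ∈ Finset.range N, ξ (m + i) ω) = -x.1 ∧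
          ∀ j, 0 < j → j < N → (∑ i ∈ Finset.range j, ξ (m + i) ω) ≠ -x.1} := by
    intro x
    rw [hFA x.1, hGC x.1]
    exact indepFun_iff_measure_inter_preimage_eq_mul.mp hIndep _ _ (hsAmeas x.1) (hsGmeas x.1)
  -- laws
  haveI : IsProbabilityMeasure (μ.map (ξ 0)) := Measure.isProbabilityMeasure_map (hmeas 0).aemeasurable
  have hlawG : μ.map (fun ω (i : Fin N) => ξ (m + ↑i) ω)
      = Measure.pi (fun _ : Fin N => μ.map (ξ 0)) := by
    rw [jointLaw μ ξ hmeas hindep m N]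
    congr 1
    funext i
    exact (hident (m + ↑i)).map_eq
  have hlawG0 : μ.map (fun ω (i : Fin N) => ξ (0 + ↑i) ω)
      = Measure.pi (fun _ : Fin N => μ.map (ξ 0)) := by
    rw [jointLaw μ ξ hmeas hindep 0 N]
    congr 1
    funext i
    exact (hident (0 + ↑i)).map_eq
  -- time reversal : μ(C x) = μ(D x)
  have hCD : ∀ x : Fin d → ℤ, x ≠ 0 →
      μ {ω | (∑ i ∈ Finset.range N, ξ (m + i) ω) = -x ∧
        ∀ j, 0 < j → j < N → (∑ i ∈ Finset.range j, ξ (m + i) ω) ≠ -x}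
      = μ {ω | S N ω = -x ∧ ∀ k, 0 < k → k ≤ N → S k ω ≠ 0} := by
    intro x hx0
    rw [hGC x, hG0D x, ← Measure.map_apply hGmeasfun (hsGmeas x),
      ← Measure.map_apply hG0measfun (hsDmeas x), hlawG, hlawG0]
    -- now both sides are the product measure of the sets sG x and sD x
    set r := MeasurableEquiv.piCongrLeft (fun _ : Fin N => Fin d → ℤ) Fin.revPerm with hrdef
    have hr : ∀ (v : Fin N → Fin d → ℤ) (j : Fin N), r v j = v (Fin.rev j) := by
      intro v j
      have := Equiv.piCongrLeft_apply_apply (fun _ : Fin N => Fin d → ℤ) Fin.revPerm v (Fin.rev j)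
      rw [hrdef, MeasurableEquiv.coe_piCongrLeft]
      simpa using this
    have hrv : ∀ (v : Fin N → Fin d → ℤ) (k : ℕ), k ≤ N →
        psum (r v) k = psum v N - psum v (N - k) := by
      intro v k hk
      have hfun : r v = fun j => v (Fin.rev j) := funext (hr v)
      rw [hfun, psum_rev v hk]
    have hset : sG x = ⇑r ⁻¹' sD x := by
      ext v
      simp only [hsG, hsD, Set.mem_preimage, Set.mem_setOf_eq]
      constructor
      · rintro ⟨h1, h2⟩
        refine ⟨by rw [hrv v N le_rfl, Nat.sub_self, psum_zero, sub_zero]; exact h1, ?_⟩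
        intro k hk hkN
        rw [hrv v k hkN, h1]
        rcases Nat.eq_zero_or_pos (N - k) with h0 | hpos
        · rw [h0, psum_zero, sub_zero]
          simpa using hx0
        · exact sub_ne_zero.mpr fun hEq => h2 (N - k) hpos (by omega) hEq.symm
      · rintro ⟨h1, h2⟩
        have htot : psum v N = -x := by
          rw [hrv v N le_rfl, Nat.sub_self, psum_zero, sub_zero] at h1
          exact h1
        refine ⟨htot, fun j hj hjN hEq => ?_⟩
        refine h2 (N - j) (by omega) (by omega) ?_
        rw [hrv v (N - j) (by omega), show N - (N - j) = j from by omega, htot, hEq, sub_self]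
    rw [hset]
    exact (measurePreserving_piCongrLeft (fun _ : Fin N => μ.map (ξ 0))
      Fin.revPerm).measure_preimage (hsDmeas x).nullMeasurableSet
  -- put everything together
  rw [hE, measure_iUnion hdisj hACmeas,
    ENNReal.tsum_toReal_eq (fun x => measure_ne_top μ _)]
  refine tsum_congr fun x => ?_
  rw [hprod x, hCD x.1 x.2, ENNReal.toReal_mul]
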